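/- Let Z₁ ⊆ B(H₁) and Z₂ ⊆ B(H₂) be spin factors and let φ : Z₁ → Z₂ be an injective linear map satisfying φ({a,b,c}) = {φ(a),φ(b),φ(c)} for all a,b,c ∈ Z₁. Then there exists λ ∈ ℂ with |λ| = 1 such that φ(x)* = λ·φ(x) for every self-adjoint x ∈ Z₁. -/

import Mathlib

open scoped ComplexConjugate

lemma scalar_one_inj {H : Type*} [NormedAddCommGroup H] [InnerProductSpace ℂ H] [Nontrivial H]
    {c d : ℂ} (h : c • (1 : H →L[ℂ] H) = d • (1 : H →L[ℂ] H)) : c = d := by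
  obtain ⟨v, hv⟩ := exists_ne (0 : H)
  have h2 : c • v = d • v := by
    have := congrArg (fun T : H →L[ℂ] H => T v) h
    simpa using this
  exact smul_left_injective ℂ hv h2

lemma op_pos {H : Type*} [NormedAddCommGroup H] [InnerProductSpace ℂ H] [CompleteSpace H]
    [Nontrivial H]
    {A : H →L[ℂ] H} {c : ℂ} (h : A * star A + star A * A = c • 1) :
    ∃ r : ℝ, c = r ∧ 0 ≤ r ∧ (A ≠ 0 → 0 < r) := by
  have key : ∀ v : H, ((‖star A v‖ ^ 2 + ‖A v‖ ^ 2 : ℝ) : ℂ) = c * ((‖v‖ ^ 2 : ℝ) : ℂ) := by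
    intro v
    have h1 := congrArg (fun T : H →L[ℂ] H => (inner ℂ v (T v) : ℂ)) h
    simp only [ContinuousLinearMap.add_apply, ContinuousLinearMap.mul_apply,
      ContinuousLinearMap.smul_apply, ContinuousLinearMap.one_apply] at h1
    rw [inner_add_right, inner_smul_right, ContinuousLinearMap.star_eq_adjoint] at h1
    have e1 : (inner ℂ v (A ((ContinuousLinearMap.adjoint A) v)) : ℂ)
        = inner ℂ ((ContinuousLinearMap.adjoint A) v) ((ContinuousLinearMap.adjoint A) v) :=
      (ContinuousLinearMap.adjoint_inner_left A ((ContinuousLinearMap.adjoint A) v) v).symm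
    have e2 : (inner ℂ v ((ContinuousLinearMap.adjoint A) (A v)) : ℂ) = inner ℂ (A v) (A v) := by
      rw [ContinuousLinearMap.adjoint_inner_right]
    rw [e1, e2, inner_self_eq_norm_sq_to_K, inner_self_eq_norm_sq_to_K,
      inner_self_eq_norm_sq_to_K, ← ContinuousLinearMap.star_eq_adjoint] at h1
    exact_mod_cast h1
  obtain ⟨v, hv⟩ := exists_ne (0 : H)
  have hn : (0:ℝ) < ‖v‖ ^ 2 := pow_pos (norm_pos_iff.mpr hv) 2
  have hn' : ((‖v‖ ^ 2 : ℝ) : ℂ) ≠ 0 := by exact_mod_cast hn.ne'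
  set r : ℝ := (‖star A v‖ ^ 2 + ‖A v‖ ^ 2) / (‖v‖ ^ 2) with hr
  have hc : c = (r : ℂ) := by
    have hrn : r * ‖v‖ ^ 2 = ‖star A v‖ ^ 2 + ‖A v‖ ^ 2 := div_mul_cancel₀ _ hn.ne'
    have h2 : (r : ℂ) * ((‖v‖ ^ 2 : ℝ) : ℂ) = ((‖star A v‖ ^ 2 + ‖A v‖ ^ 2 : ℝ) : ℂ) := by
      rw [← hrn]; push_cast; ring
    exact mul_right_cancel₀ hn' (by rw [h2, key v])
  refine ⟨r, hc, ?_, ?_⟩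
  · positivity
  · intro hA
    obtain ⟨w, hw⟩ : ∃ w, A w ≠ 0 := by
      by_contra hcon
      push_neg at hcon
      exact hA (ContinuousLinearMap.ext fun w => by simp [hcon w])
    have hkw := key w
    rw [hc] at hkw
    have hw2 : (0:ℝ) < ‖A w‖ ^ 2 := pow_pos (norm_pos_iff.mpr hw) 2
    have hreal : ‖star A w‖ ^ 2 + ‖A w‖ ^ 2 = r * ‖w‖ ^ 2 := by exact_mod_cast hkw
    nlinarith [sq_nonneg ‖star A w‖, sq_nonneg ‖w‖]

lemma polar_aux {R M : Type*} [Ring M] [CommRing R] [Module R M] {A B : M} {a b d : R}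
    (ha : A * A = a • 1) (hb : B * B = b • 1) (hd : (A + B) * (A + B) = d • 1) :
    A * B + B * A = (d - a - b) • 1 := by
  have e : A * A + (A * B + B * A) + B * B = d • 1 := by
    rw [← hd]; noncomm_ring
  rw [ha, hb] at e
  have : A * B + B * A = d • 1 - a • (1:M) - b • 1 := by
    rw [← e]; abel
  rw [this, sub_smul, sub_smul]

/-- Pure noncommutative-algebra extraction for the degenerate (`y² = 0`) case. -/
lemma bad_case_lemma {M : Type*} [Ring M] [Algebra ℂ M] {y y' z : M} {s g : ℂ}
    (hs0 : s ≠ 0)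
    (hyy : y * y = 0) (hzz : z * z = 0)
    (hsum : y * z + z * y = s • 1)
    (R2 : y * z * y' + y' * z * y = (2 * s) • y')
    (hg : z * y' + y' * z = g • 1) :
    y' = (s⁻¹ * g) • y := by
  have huv : (y * z) * (z * y) = 0 := by
    rw [mul_assoc, ← mul_assoc z z y, hzz, zero_mul, mul_zero]
  have hvu : (z * y) * (y * z) = 0 := by
    rw [mul_assoc, ← mul_assoc y y z, hyy, zero_mul, mul_zero]
  have huu : (y * z) * (y * z) = s • (y * z) := by
    have h := congrArg (fun T => (y * z) * T) hsum
    simp only [mul_add, mul_smul_comm, mul_one] at h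
    rw [huv, add_zero] at h
    exact h
  have hvv : (z * y) * (z * y) = s • (z * y) := by
    have h := congrArg (fun T => T * (z * y)) hsum
    simp only [add_mul, smul_mul_assoc, one_mul] at h
    rw [huv, zero_add] at h
    exact h
  have hyu : y * (y * z) = 0 := by rw [← mul_assoc, hyy, zero_mul]
  have hvy : (z * y) * y = 0 := by rw [mul_assoc, hyy, mul_zero]
  -- p := y * y' is zero
  have hpv : (y * y') * (z * y) = (2 * s) • (y * y') := by
    have h := congrArg (fun T => y * T) R2
    simp only [mul_add, mul_smul_comm] at h
    rw [show y * (y * z * y') = (y * (y * z)) * y' by noncomm_ring, hyu, zero_mul,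
      zero_add] at h
    rw [show y * (y' * z * y) = (y * y') * (z * y) by noncomm_ring] at h
    exact h
  have hp : y * y' = 0 := by
    have h2 : ((y * y') * (z * y)) * (z * y) = s • ((y * y') * (z * y)) := by
      rw [mul_assoc, hvv, mul_smul_comm, mul_assoc]
    rw [hpv, smul_mul_assoc, hpv, smul_smul, smul_smul] at h2
    have h3 : ((2 * s) * (2 * s) - s * (2 * s)) • (y * y') = 0 := by
      rw [sub_smul, h2, sub_self]
    rcases smul_eq_zero.mp h3 with h | h
    · exfalso
      have h5 : s * s = 0 := by linear_combination h / 2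
      exact hs0 (mul_self_eq_zero.mp h5)
    · exact h
  -- q := y' * y is zero
  have huq : (y * z) * (y' * y) = (2 * s) • (y' * y) := by
    have h := congrArg (fun T => T * y) R2
    simp only [add_mul, smul_mul_assoc] at h
    rw [show y' * z * y * y = y' * ((z * y) * y) by noncomm_ring, hvy, mul_zero,
      add_zero] at h
    rw [show y * z * y' * y = (y * z) * (y' * y) by noncomm_ring] at h
    exact h
  have hq : y' * y = 0 := by
    have h2 : (y * z) * ((y * z) * (y' * y)) = s • ((y * z) * (y' * y)) := by
      rw [← mul_assoc, huu, smul_mul_assoc]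
    rw [huq, mul_smul_comm, huq, smul_smul, smul_smul] at h2
    have h3 : ((2 * s) * (2 * s) - s * (2 * s)) • (y' * y) = 0 := by
      rw [sub_smul, h2, sub_self]
    rcases smul_eq_zero.mp h3 with h | h
    · exfalso
      have h5 : s * s = 0 := by linear_combination h / 2
      exact hs0 (mul_self_eq_zero.mp h5)
    · exact h
  -- now compute
  have hu_y' : (y * z) * y' = g • y := by
    have hzy' : z * y' = g • 1 - y' * z := eq_sub_of_add_eq hg
    rw [mul_assoc, hzy', mul_sub, mul_smul_comm, mul_one, ← mul_assoc, hp, zero_mul, sub_zero]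
  have hy'_v : y' * (z * y) = g • y := by
    have hy'z : y' * z = g • 1 - z * y' := eq_sub_of_add_eq' hg
    rw [← mul_assoc, hy'z, sub_mul, smul_mul_assoc, one_mul, mul_assoc, hq, mul_zero, sub_zero]
  have hfin : (2 * g) • y = (2 * s) • y' := by
    have hh : (y * z) * y' + y' * (z * y) = (2 * s) • y' := by
      rw [← R2]; noncomm_ring
    rw [hu_y', hy'_v] at hh
    rw [← hh, two_mul, add_smul]
  have := congrArg (fun T => (2 * s)⁻¹ • T) hfin
  simp only [smul_smul] at this
  rw [inv_mul_cancel₀ (by simpa using hs0 : (2:ℂ) * s ≠ 0), one_smul] at this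
  rw [← this]
  congr 1
  field_simp

open scoped ComplexConjugate in
/-- Per-element dichotomy: either `star y` is a multiple of `y`, or `y'` is a multiple of `y`. -/
lemma spin_key {H : Type*} [NormedAddCommGroup H] [InnerProductSpace ℂ H] [CompleteSpace H]
    [Nontrivial H]
    (Z : Submodule ℂ (H →L[ℂ] H))
    (hstar : ∀ A ∈ Z, star A ∈ Z)
    (hsq : ∀ A ∈ Z, ∃ c : ℂ, A * A = c • (1 : H →L[ℂ] H))
    {y y' : H →L[ℂ] H} (hy : y ∈ Z) (hy' : y' ∈ Z) (hy0 : y ≠ 0)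
    {s : ℂ} (hs0 : s ≠ 0)
    (R1 : s • y = y * star y * y)
    (R2 : s • y' = (1/2 : ℂ) • (y * star y * y' + y' * star y * y)) :
    (∃ lam : ℂ, star y = lam • y) ∨ (∃ c : ℂ, y' = c • y) := by
  obtain ⟨t, ht⟩ := hsq y hy
  obtain ⟨e', he'⟩ := hsq (y + star y) (Z.add_mem hy (hstar y hy))
  have hstt : star y * star y = (conj t) • (1 : H →L[ℂ] H) := by
    have h := congrArg star ht
    rwa [star_mul, star_smul, star_one] at h
  have he : y * star y + star y * y = (e' - t - conj t) • (1 : H →L[ℂ] H) :=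
    polar_aux ht hstt he'
  have eq2 : s • y = (e' - t - conj t) • y - t • star y := by
    rw [R1]
    have h1 : star y * y = (e' - t - conj t) • (1 : H →L[ℂ] H) - y * star y :=
      eq_sub_of_add_eq' he
    calc y * star y * y = y * (star y * y) := mul_assoc _ _ _
      _ = y * ((e' - t - conj t) • (1 : H →L[ℂ] H) - y * star y) := by rw [h1]
      _ = (e' - t - conj t) • y - t • star y := by
          rw [mul_sub, mul_smul_comm, mul_one, ← mul_assoc, ht, smul_mul_assoc, one_mul]
  have eq3 : t • star y = ((e' - t - conj t) - s) • y := by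
    rw [sub_smul, eq2]; abel
  by_cases ht0 : t = 0
  · right
    have hyy : y * y = 0 := by rw [ht, ht0, zero_smul]
    have hzz : star y * star y = 0 := by rw [hstt, ht0, map_zero, zero_smul]
    have hes : (e' - t - conj t) = s := by
      have h0 : ((e' - t - conj t) - s) • y = 0 := by rw [← eq3, ht0, zero_smul]
      rcases smul_eq_zero.mp h0 with h | h
      · exact sub_eq_zero.mp h
      · exact absurd h hy0
    have hsum : y * star y + star y * y = s • (1 : H →L[ℂ] H) := by rw [he, hes]
    have R2' : y * star y * y' + y' * star y * y = (2 * s) • y' := by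
      have h := congrArg (fun T => (2:ℂ) • T) R2
      simp only [smul_smul] at h
      norm_num at h
      rw [← h]
    obtain ⟨g1, hg1⟩ := hsq (star y + y') (Z.add_mem (hstar y hy) hy')
    obtain ⟨t', ht'⟩ := hsq y' hy'
    have hzz' : star y * star y = (0:ℂ) • (1 : H →L[ℂ] H) := by rw [hzz, zero_smul]
    have hg : star y * y' + y' * star y = (g1 - 0 - t') • (1 : H →L[ℂ] H) :=
      polar_aux hzz' ht' hg1
    exact ⟨s⁻¹ * (g1 - 0 - t'), bad_case_lemma hs0 hyy hzz hsum R2' hg⟩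
  · left
    refine ⟨((e' - t - conj t) - s) / t, ?_⟩
    have h := congrArg (fun T => t⁻¹ • T) eq3
    simp only [smul_smul] at h
    rw [inv_mul_cancel₀ ht0, one_smul] at h
    rw [h]
    congr 1
    field_simp

set_option maxHeartbeats 1000000 in
open scoped ComplexConjugate in
theorem spin_factor_morphism_selfadjoint_part
    {H₁ : Type*} [NormedAddCommGroup H₁] [InnerProductSpace ℂ H₁] [CompleteSpace H₁]
    [Nontrivial H₁]
    {H₂ : Type*} [NormedAddCommGroup H₂] [InnerProductSpace ℂ H₂] [CompleteSpace H₂]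
    [Nontrivial H₂]
    (Z₁ : Submodule ℂ (H₁ →L[ℂ] H₁)) (Z₂ : Submodule ℂ (H₂ →L[ℂ] H₂))
    [FiniteDimensional ℂ Z₁] [FiniteDimensional ℂ Z₂]
    (hstar₁ : ∀ A ∈ Z₁, star A ∈ Z₁) (hstar₂ : ∀ A ∈ Z₂, star A ∈ Z₂)
    (hsq₁ : ∀ A ∈ Z₁, ∃ c : ℂ, A * A = c • (1 : H₁ →L[ℂ] H₁))
    (hsq₂ : ∀ A ∈ Z₂, ∃ c : ℂ, A * A = c • (1 : H₂ →L[ℂ] H₂))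
    (hdim₁ : 2 ≤ Module.finrank ℂ Z₁) (hdim₂ : 2 ≤ Module.finrank ℂ Z₂)
    (φ : Z₁ →ₗ[ℂ] Z₂) (hinj : Function.Injective φ)
    (hφ : ∀ a b c w : Z₁,
      (w : H₁ →L[ℂ] H₁) =
        (1/2 : ℂ) • ((a : H₁ →L[ℂ] H₁) * star (b : H₁ →L[ℂ] H₁) * (c : H₁ →L[ℂ] H₁) +
          (c : H₁ →L[ℂ] H₁) * star (b : H₁ →L[ℂ] H₁) * (a : H₁ →L[ℂ] H₁)) →
      (φ w : H₂ →L[ℂ] H₂) =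
        (1/2 : ℂ) • ((φ a : H₂ →L[ℂ] H₂) * star (φ b : H₂ →L[ℂ] H₂) * (φ c : H₂ →L[ℂ] H₂) +
          (φ c : H₂ →L[ℂ] H₂) * star (φ b : H₂ →L[ℂ] H₂) * (φ a : H₂ →L[ℂ] H₂))) :
    ∃ lam : ℂ, ‖lam‖ = 1 ∧
      ∀ x : Z₁, star (x : H₁ →L[ℂ] H₁) = (x : H₁ →L[ℂ] H₁) →
        star (φ x : H₂ →L[ℂ] H₂) = lam • (φ x : H₂ →L[ℂ] H₂) := by
  classical
  have hz : ∀ x : Z₁, (φ x : H₂ →L[ℂ] H₂) = 0 → (x : H₁ →L[ℂ] H₁) = 0 := by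
    intro x hx
    have h1 : φ x = 0 := Subtype.ext (by simpa using hx)
    have h2 : x = 0 := hinj (by rw [h1, map_zero])
    rw [h2]; rfl
  have exists_nonmult : ∀ x : Z₁, ∃ x' : Z₁, ∀ c : ℂ, x' ≠ c • x := by
    intro x
    by_contra hcon
    push_neg at hcon
    have h1 : Module.finrank ℂ Z₁ ≤ 1 := finrank_le_one x (fun w => by
      obtain ⟨c, hc⟩ := hcon w; exact ⟨c, hc.symm⟩)
    omega
  have hs_fact : ∀ x : Z₁, star (x : H₁ →L[ℂ] H₁) = (x : H₁ →L[ℂ] H₁) →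
      (x : H₁ →L[ℂ] H₁) ≠ 0 →
      ∃ s : ℂ, s ≠ 0 ∧ (x : H₁ →L[ℂ] H₁) * (x : H₁ →L[ℂ] H₁) = s • 1 := by
    intro x hsa hx0
    obtain ⟨s, hs⟩ := hsq₁ x x.2
    have h2 : (x : H₁ →L[ℂ] H₁) * star (x : H₁ →L[ℂ] H₁) +
        star (x : H₁ →L[ℂ] H₁) * (x : H₁ →L[ℂ] H₁) = (2 * s) • 1 := by
      rw [hsa, hs, two_mul, add_smul]
    obtain ⟨r, hr, _, hrpos⟩ := op_pos h2
    refine ⟨s, ?_, hs⟩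
    intro h0
    rw [h0, mul_zero] at hr
    have hrr : r = 0 := by exact_mod_cast hr.symm
    have := hrpos hx0
    linarith
  -- key: per-element lambda
  have key : ∀ x : Z₁, star (x : H₁ →L[ℂ] H₁) = (x : H₁ →L[ℂ] H₁) →
      (x : H₁ →L[ℂ] H₁) ≠ 0 →
      ∃ lam : ℂ, star (φ x : H₂ →L[ℂ] H₂) = lam • (φ x : H₂ →L[ℂ] H₂) := by
    intro x hsa hx0
    obtain ⟨s, hs0, hs⟩ := hs_fact x hsa hx0
    obtain ⟨x', hx'⟩ := exists_nonmult x
    have hw1 : ((s • x : Z₁) : H₁ →L[ℂ] H₁) =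
        (1/2 : ℂ) • ((x : H₁ →L[ℂ] H₁) * star (x : H₁ →L[ℂ] H₁) * (x : H₁ →L[ℂ] H₁) +
          (x : H₁ →L[ℂ] H₁) * star (x : H₁ →L[ℂ] H₁) * (x : H₁ →L[ℂ] H₁)) := by
      rw [hsa, show ((x : H₁ →L[ℂ] H₁) * (x : H₁ →L[ℂ] H₁)) * (x : H₁ →L[ℂ] H₁)
        = s • (x : H₁ →L[ℂ] H₁) by rw [hs, smul_mul_assoc, one_mul], Submodule.coe_smul]
      module
    have R1' := hφ x x x (s • x) hw1
    rw [map_smul, Submodule.coe_smul] at R1'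
    have R1 : s • (φ x : H₂ →L[ℂ] H₂) =
        (φ x : H₂ →L[ℂ] H₂) * star (φ x : H₂ →L[ℂ] H₂) * (φ x : H₂ →L[ℂ] H₂) := by
      rw [R1']; module
    have hw2 : ((s • x' : Z₁) : H₁ →L[ℂ] H₁) =
        (1/2 : ℂ) • ((x : H₁ →L[ℂ] H₁) * star (x : H₁ →L[ℂ] H₁) * (x' : H₁ →L[ℂ] H₁) +
          (x' : H₁ →L[ℂ] H₁) * star (x : H₁ →L[ℂ] H₁) * (x : H₁ →L[ℂ] H₁)) := by
      rw [hsa, show ((x : H₁ →L[ℂ] H₁) * (x : H₁ →L[ℂ] H₁)) * (x' : H₁ →L[ℂ] H₁)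
          = s • (x' : H₁ →L[ℂ] H₁) by rw [hs, smul_mul_assoc, one_mul],
        show ((x' : H₁ →L[ℂ] H₁) * (x : H₁ →L[ℂ] H₁)) * (x : H₁ →L[ℂ] H₁)
          = s • (x' : H₁ →L[ℂ] H₁) by rw [mul_assoc, hs, mul_smul_comm, mul_one],
        Submodule.coe_smul]
      module
    have R2' := hφ x x x' (s • x') hw2
    rw [map_smul, Submodule.coe_smul] at R2'
    have hY0 : (φ x : H₂ →L[ℂ] H₂) ≠ 0 := fun h => hx0 (hz x h)
    rcases spin_key Z₂ hstar₂ hsq₂ (φ x).2 (φ x').2 hY0 hs0 R1 R2' with ⟨lam, h⟩ | ⟨c, hc⟩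
    · exact ⟨lam, h⟩
    · exfalso
      refine hx' c (hinj (Subtype.ext ?_))
      rw [map_smul, Submodule.coe_smul, hc]
  -- unimodularity
  have huni : ∀ (w : H₂ →L[ℂ] H₂) (lam : ℂ), w ≠ 0 → star w = lam • w →
      ‖lam‖ = 1 := by
    intro w lam hw h
    have h2 : w = (conj lam * lam) • w := by
      conv_lhs => rw [← star_star w]
      rw [h, star_smul, h, smul_smul]
      rfl
    have h3 : (conj lam * lam - 1) • w = 0 := by rw [sub_smul, ← h2, one_smul, sub_self]
    rcases smul_eq_zero.mp h3 with h4 | h4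
    · have h5 : conj lam * lam = 1 := by rwa [sub_eq_zero] at h4
      have h6 : Complex.normSq lam = 1 := by
        have h7 := Complex.mul_conj lam
        rw [mul_comm] at h7
        rw [h7] at h5
        exact_mod_cast h5
      have h7 : ‖lam‖ ^ 2 = 1 := by rw [Complex.sq_norm, h6]
      nlinarith [norm_nonneg lam]
    · exact absurd h4 hw
  -- find a nonzero self-adjoint element x₀
  have : Nontrivial Z₁ := by
    have h0 : 0 < Module.finrank ℂ Z₁ := by omega
    exact Module.nontrivial_of_finrank_pos h0
  obtain ⟨A, hA⟩ := exists_ne (0 : Z₁)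
  obtain ⟨x₀, hx₀sa, hx₀ne⟩ : ∃ x₀ : Z₁,
      star (x₀ : H₁ →L[ℂ] H₁) = (x₀ : H₁ →L[ℂ] H₁) ∧ (x₀ : H₁ →L[ℂ] H₁) ≠ 0 := by
    have hmemP : (1/2 : ℂ) • ((A : H₁ →L[ℂ] H₁) + star (A : H₁ →L[ℂ] H₁)) ∈ Z₁ :=
      Z₁.smul_mem _ (Z₁.add_mem A.2 (hstar₁ _ A.2))
    have hmemQ : (Complex.I/2) • (star (A : H₁ →L[ℂ] H₁) - (A : H₁ →L[ℂ] H₁)) ∈ Z₁ :=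
      Z₁.smul_mem _ (Z₁.sub_mem (hstar₁ _ A.2) A.2)
    have hPsa : star ((1/2 : ℂ) • ((A : H₁ →L[ℂ] H₁) + star (A : H₁ →L[ℂ] H₁)))
        = (1/2 : ℂ) • ((A : H₁ →L[ℂ] H₁) + star (A : H₁ →L[ℂ] H₁)) := by
      rw [star_smul, star_add, star_star]
      have hc : star (1/2 : ℂ) = (1/2 : ℂ) := by
        simp [Complex.star_def, map_div₀]
      rw [hc]
      module
    have hQsa : star ((Complex.I/2) • (star (A : H₁ →L[ℂ] H₁) - (A : H₁ →L[ℂ] H₁)))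
        = (Complex.I/2) • (star (A : H₁ →L[ℂ] H₁) - (A : H₁ →L[ℂ] H₁)) := by
      rw [star_smul, star_sub, star_star]
      have hc : star (Complex.I/2 : ℂ) = -(Complex.I/2 : ℂ) := by
        simp [Complex.star_def, map_div₀, Complex.conj_I]
        ring
      rw [hc]
      module
    by_cases hP0 : (1/2 : ℂ) • ((A : H₁ →L[ℂ] H₁) + star (A : H₁ →L[ℂ] H₁)) = 0
    · refine ⟨⟨_, hmemQ⟩, hQsa, ?_⟩
      intro hQ0
      apply hA
      apply Subtype.ext
      have hdec : (A : H₁ →L[ℂ] H₁)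
          = (1/2 : ℂ) • ((A : H₁ →L[ℂ] H₁) + star (A : H₁ →L[ℂ] H₁))
            + Complex.I • ((Complex.I/2) • (star (A : H₁ →L[ℂ] H₁) - (A : H₁ →L[ℂ] H₁))) := by
        match_scalars <;> norm_num [Complex.ext_iff]
      have hQ0' : (Complex.I / 2) • (star (A : H₁ →L[ℂ] H₁) - (A : H₁ →L[ℂ] H₁)) = 0 := hQ0
      show (A : H₁ →L[ℂ] H₁) = ((0:Z₁) : H₁ →L[ℂ] H₁)
      rw [hdec, hP0, hQ0']
      simp
    · exact ⟨⟨_, hmemP⟩, hPsa, hP0⟩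
  obtain ⟨lam₀, hlam₀⟩ := key x₀ hx₀sa hx₀ne
  have hY₀ne : (φ x₀ : H₂ →L[ℂ] H₂) ≠ 0 := fun h => hx₀ne (hz x₀ h)
  refine ⟨lam₀, huni _ lam₀ hY₀ne hlam₀, ?_⟩
  intro x hxsa
  by_cases hx0 : (x : H₁ →L[ℂ] H₁) = 0
  · have hx0' : x = 0 := Subtype.ext (by simpa using hx0)
    rw [hx0', map_zero]
    simp
  by_cases hmul : ∃ c : ℂ, x = c • x₀
  · obtain ⟨c, rfl⟩ := hmul
    have hcreal : star c = c := by
      have h := hxsa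
      rw [Submodule.coe_smul, star_smul, hx₀sa] at h
      have h2 : (star c - c) • (x₀ : H₁ →L[ℂ] H₁) = 0 := by
        rw [sub_smul, h, sub_self]
      rcases smul_eq_zero.mp h2 with h3 | h3
      · exact sub_eq_zero.mp h3
      · exact absurd h3 hx₀ne
    rw [map_smul, Submodule.coe_smul, star_smul, hlam₀, hcreal, smul_comm]
  · have hx0' : (x : H₁ →L[ℂ] H₁) ≠ 0 := hx0
    obtain ⟨lam₁, h1⟩ := key x hxsa hx0'
    have hxx₀sa : star ((x + x₀ : Z₁) : H₁ →L[ℂ] H₁) = ((x + x₀ : Z₁) : H₁ →L[ℂ] H₁) := by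
      rw [Submodule.coe_add, star_add, hxsa, hx₀sa]
    have hxx₀ne : ((x + x₀ : Z₁) : H₁ →L[ℂ] H₁) ≠ 0 := by
      intro h
      apply hmul
      refine ⟨-1, Subtype.ext ?_⟩
      rw [Submodule.coe_smul]
      rw [Submodule.coe_add] at h
      have := eq_neg_of_add_eq_zero_left h
      rw [this]
      module
    obtain ⟨lam₂, h2⟩ := key (x + x₀) hxx₀sa hxx₀ne
    rw [map_add, Submodule.coe_add, star_add, h1, hlam₀, smul_add] at h2
    have h3 : (lam₁ - lam₂) • (φ x : H₂ →L[ℂ] H₂) + (lam₀ - lam₂) • (φ x₀ : H₂ →L[ℂ] H₂)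
        = 0 := by
      rw [sub_smul, sub_smul, sub_add_sub_comm, h2, sub_self]
    by_cases h12 : lam₁ = lam₂
    · have h4 : (lam₀ - lam₂) • (φ x₀ : H₂ →L[ℂ] H₂) = 0 := by
        rw [h12, sub_self, zero_smul, zero_add] at h3
        exact h3
      rcases smul_eq_zero.mp h4 with h5 | h5
      · have h6 : lam₀ = lam₂ := sub_eq_zero.mp h5
        rw [h1, h12, ← h6]
      · exact absurd h5 hY₀ne
    · exfalso
      apply hmul
      have hne : lam₁ - lam₂ ≠ 0 := sub_ne_zero.mpr h12
      have h4 : (φ x : H₂ →L[ℂ] H₂)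
          = ((lam₁ - lam₂)⁻¹ * (lam₂ - lam₀)) • (φ x₀ : H₂ →L[ℂ] H₂) := by
        have h5 : (lam₁ - lam₂) • (φ x : H₂ →L[ℂ] H₂)
            = (lam₂ - lam₀) • (φ x₀ : H₂ →L[ℂ] H₂) := by
          have := eq_neg_of_add_eq_zero_left h3
          rw [this]
          module
        have h6 := congrArg (fun T => (lam₁ - lam₂)⁻¹ • T) h5
        simp only [smul_smul] at h6
        rw [inv_mul_cancel₀ hne, one_smul] at h6
        exact h6
      refine ⟨(lam₁ - lam₂)⁻¹ * (lam₂ - lam₀), hinj (Subtype.ext ?_)⟩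
      rw [map_smul, Submodule.coe_smul, h4]
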